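/- The set of leader codewords L(C) of a linear code C is a trial set for C with respect to any weight compatible order ≺: a word y is a correctable error (≺-minimal in its coset) if and only if y ≺ y + c or y = y + c for all c ∈ L(C). -/

import Mathlib

open Finset Set

variable {p m n : ℕ} [Fact p.Prime] {K : Type} [Field K] [Fintype K] [DecidableEq K]
  [Algebra (ZMod p) K]

/-- Hamming weight -/
def hw (v : Fin n → K) : ℕ := (Finset.univ.filter fun i => v i ≠ 0).card

/-- Hamming distance -/
def dH (x y : Fin n → K) : ℕ := hw (x - y)

/-- Hamming distance from a word to a set of words -/
noncomputable def dHSet (A : Set (Fin n → K)) (y : Fin n → K) : ℕ := sInf ((dH y) '' A)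

/-- y is a coset leader: minimal Hamming weight in its coset -/
def isCosetLeader (C : Submodule K (Fin n → K)) (y : Fin n → K) : Prop :=
  ∀ c ∈ C, hw y ≤ hw (y + c)

/-- the set of coset leaders -/
def CL (C : Submodule K (Fin n → K)) : Set (Fin n → K) := {y | isCosetLeader C y}

/-- weight of the coset of y -/
noncomputable def cosetWt (C : Submodule K (Fin n → K)) (y : Fin n → K) : ℕ :=
  sInf (hw '' {z | z - y ∈ C})

/-- minimum distance of the code -/
noncomputable def dmin (C : Submodule K (Fin n → K)) : ℕ :=
  sInf (hw '' {c | c ∈ C ∧ c ≠ 0})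

/-- covering radius -/
noncomputable def covRad (C : Submodule K (Fin n → K)) : ℕ :=
  sSup (Set.range fun y => dHSet (C : Set (Fin n → K)) y)

/-- Voronoi region of a codeword -/
def VorD (C : Submodule K (Fin n → K)) (c : Fin n → K) : Set (Fin n → K) :=
  {y | ∀ c' ∈ C, dH y c ≤ dH y c'}

/-- words at Hamming distance exactly one from A -/
def XB (A : Set (Fin n → K)) : Set (Fin n → K) := {y | dHSet A y = 1}

/-- boundary of a set of words -/
def bdry (A : Set (Fin n → K)) : Set (Fin n → K) := XB A ∪ XB Aᶜ

/-- canonical generator e_{ij} = β^{j-1} e_i -/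
def eGen (β : K) (i : Fin n) (j : Fin m) : Fin n → K := Pi.single i (β ^ (j : ℕ))

/-- leader codeword -/
def isLeaderCodeword (C : Submodule K (Fin n → K)) (b : Module.Basis (Fin m) (ZMod p) K)
    (β : K) (w : Fin n → K) : Prop :=
  w ≠ 0 ∧ w ∈ C ∧ ∃ (n₁ n₂ : Fin n → K) (i : Fin n) (j : Fin m),
    w = n₁ + eGen β i j - n₂ ∧
    (b.repr ((n₁ + eGen β i j) i) j).val = (b.repr (n₁ i) j).val + 1 ∧
    isCosetLeader C n₂ ∧ dHSet (CL C) n₁ ≤ 1 ∧ dHSet (CL C) (n₁ + eGen β i j) ≤ 1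

/-- correctable errors: minimal element of each coset w.r.t. the order r -/
def E0 (C : Submodule K (Fin n → K)) (r : (Fin n → K) → (Fin n → K) → Prop) :
    Set (Fin n → K) := {y | ∀ z, z - y ∈ C → z ≠ y → r y z}

/-- uncorrectable errors -/
def E1 (C : Submodule K (Fin n → K)) (r : (Fin n → K) → (Fin n → K) → Prop) :
    Set (Fin n → K) := (E0 C r)ᶜ

/-- H(y) = { c ∈ C : y - c ≺ y } -/
def Hset (C : Submodule K (Fin n → K)) (r : (Fin n → K) → (Fin n → K) → Prop)
    (y : Fin n → K) : Set (Fin n → K) := {c | c ∈ C ∧ r (y - c) y}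

/-- u is a larger half of c -/
def isLargerHalf (r : (Fin n → K) → (Fin n → K) → Prop) (c u : Fin n → K) : Prop :=
  r (u - c) u ∧ ∀ u', r (u' - c) u' → ¬ r u' u

/-- larger halves of elements of T -/
def LH (r : (Fin n → K) → (Fin n → K) → Prop) (T : Set (Fin n → K)) :
    Set (Fin n → K) := {u | ∃ c ∈ T, isLargerHalf r c u}

/-- x ⊂₁ y : componentwise F_p-coefficient containment with disjoint generalized
supports of x and y - x -/
def subset1 (b : Module.Basis (Fin m) (ZMod p) K) (x y : Fin n → K) : Prop :=
  (∀ (i : Fin n) (j : Fin m), (b.repr (x i) j).val ≤ (b.repr (y i) j).val) ∧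
  ∀ (i : Fin n) (j : Fin m), b.repr (x i) j ≠ 0 → b.repr ((y - x) i) j = 0

/-- minimal uncorrectable errors w.r.t. ⊂₁ -/
def M1 (C : Submodule K (Fin n → K)) (r : (Fin n → K) → (Fin n → K) → Prop)
    (b : Module.Basis (Fin m) (ZMod p) K) : Set (Fin n → K) :=
  {y | y ∈ E1 C r ∧ ∀ x, subset1 b x y → x ∈ E1 C r → x = y}

/-- trial set -/
def isTrialSet (C : Submodule K (Fin n → K)) (r : (Fin n → K) → (Fin n → K) → Prop)
    (T : Set (Fin n → K)) : Prop :=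
  T ⊆ (C : Set (Fin n → K)) ∧ (0 : Fin n → K) ∉ T ∧
    ∀ y, y ∈ E0 C r ↔ ∀ c ∈ T, (y = y + c ∨ r y (y + c))

section Helpers

variable {p m n : ℕ} [Fact p.Prime] {K : Type} [Field K] [Fintype K] [DecidableEq K]
  [Algebra (ZMod p) K]

lemma hw_zero : hw (0 : Fin n → K) = 0 := by simp [hw]

lemma hw_eq_zero_iff {v : Fin n → K} : hw v = 0 ↔ v = 0 := by
  simp [hw, Finset.filter_eq_empty_iff, Finset.card_eq_zero, funext_iff]

lemma hw_close {x y : Fin n → K} (i₀ : Fin n) (h : ∀ i, i ≠ i₀ → x i = y i) :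
    hw x ≤ hw y + 1 := by
  have hsub : (Finset.univ.filter fun i => x i ≠ 0) ⊆
      insert i₀ (Finset.univ.filter fun i => y i ≠ 0) := by
    intro i hi
    simp only [Finset.mem_filter, Finset.mem_univ, true_and] at hi
    by_cases hii : i = i₀
    · simp [hii]
    · simp only [Finset.mem_insert, Finset.mem_filter, Finset.mem_univ, true_and]
      exact Or.inr (h i hii ▸ hi)
  calc hw x ≤ (insert i₀ (Finset.univ.filter fun i => y i ≠ 0)).card :=
        Finset.card_le_card hsub
    _ ≤ hw y + 1 := by
        simpa [hw] using Finset.card_insert_le i₀ _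

lemma hw_le_one {v : Fin n → K} (i₀ : Fin n) (h : ∀ i, i ≠ i₀ → v i = 0) :
    hw v ≤ 1 := by
  have := hw_close (x := v) (y := 0) i₀ (by simpa using h)
  simpa [hw_zero] using this

lemma hw_single_like {v : Fin n → K} (i₀ : Fin n) (h0 : v i₀ ≠ 0)
    (h : ∀ i, i ≠ i₀ → v i = 0) : hw v = 1 := by
  refine le_antisymm (hw_le_one i₀ h) ?_
  have : i₀ ∈ Finset.univ.filter fun i => v i ≠ 0 := by simp [h0]
  have := Finset.card_pos.mpr ⟨i₀, this⟩
  simpa [hw] using this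

lemma zero_CL (C : Submodule K (Fin n → K)) : isCosetLeader C 0 := by
  intro c _
  simp [hw_zero]

lemma dHSet_le {A : Set (Fin n → K)} {w v : Fin n → K} (hA : w ∈ A) :
    dHSet A v ≤ dH v w :=
  Nat.sInf_le ⟨w, hA, rfl⟩

lemma exists_close {C : Submodule K (Fin n → K)} {v : Fin n → K}
    (h : dHSet (CL C) v ≤ 1) : ∃ w, isCosetLeader C w ∧ hw (v - w) ≤ 1 := by
  have hne : ((dH v) '' (CL C)).Nonempty := ⟨dH v 0, 0, zero_CL C, rfl⟩
  have hmem := Nat.sInf_mem hne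
  obtain ⟨w, hw1, hw2⟩ := hmem
  exact ⟨w, hw1, by rw [← dH]; rw [hw2]; exact h⟩

end Helpers
section Helpers2
set_option linter.unusedSectionVars false

variable {p m n : ℕ} [Fact p.Prime] {K : Type} [Field K] [Fintype K] [DecidableEq K]
  [Algebra (ZMod p) K]

lemma val_pred {a : ZMod p} (ha : a ≠ 0) : a.val = (a - 1).val + 1 := by
  haveI : NeZero p := ⟨(Fact.out : p.Prime).ne_zero⟩
  have hlt : a.val < p := ZMod.val_lt a
  have hpos : 0 < a.val := Nat.pos_of_ne_zero (fun h => ha ((ZMod.val_eq_zero a).mp h))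
  have hcast : ((a.val : ℕ) : ZMod p) = a := ZMod.natCast_rightInverse a
  have h1 : a - 1 = (((a.val - 1 : ℕ)) : ZMod p) := by
    rw [Nat.cast_sub hpos, hcast, Nat.cast_one]
  rw [h1, ZMod.val_cast_of_lt (by omega)]
  omega

lemma exists_repr_ne (b : Module.Basis (Fin m) (ZMod p) K) {v : K} (hv : v ≠ 0) :
    ∃ j, b.repr v j ≠ 0 := by
  by_contra h
  push_neg at h
  apply hv
  have : b.repr v = 0 := by ext j; exact h j
  simpa using congrArg b.repr.symm this

lemma repr_sub_pow (b : Module.Basis (Fin m) (ZMod p) K) {β : K}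
    (hβ : ∀ j : Fin m, b j = β ^ (j : ℕ)) (v : K) (j : Fin m) :
    b.repr (v - β ^ (j : ℕ)) j = b.repr v j - 1 := by
  rw [← hβ j, map_sub, Finsupp.sub_apply, Module.Basis.repr_self, Finsupp.single_eq_same]

lemma zeroing {C : Submodule K (Fin n → K)} {w : Fin n → K}
    (hwCL : isCosetLeader C w) (i₀ : Fin n) :
    isCosetLeader C (Function.update w i₀ 0) := by
  intro c hc
  set w' := Function.update w i₀ 0 with hw'
  by_cases h0 : w i₀ = 0
  · have : w' = w := by
      funext i
      by_cases hi : i = i₀ <;> simp [hw', hi, Function.update, h0]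
    rw [this]; exact hwCL c hc
  · -- hw w = hw w' + 1
    have hup : ∀ i, i ≠ i₀ → w' i = w i := by
      intro i hi; simp [hw', Function.update, hi]
    have h1 : hw w = hw w' + 1 := by
      have hset : (Finset.univ.filter fun i => w i ≠ 0) =
          insert i₀ (Finset.univ.filter fun i => w' i ≠ 0) := by
        ext i
        by_cases hi : i = i₀
        · simp [hi, h0]
        · simp [hi, hup i hi]
      have hni : i₀ ∉ (Finset.univ.filter fun i => w' i ≠ 0) := by simp [hw']
      rw [hw, hset, Finset.card_insert_of_notMem hni, hw]
    have h2 : hw (w + c) ≤ hw (w' + c) + 1 :=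
      hw_close i₀ (fun i hi => by simp [Pi.add_apply, hup i hi])
    have h3 := hwCL c hc
    omega

/-- decomposition of a nonzero coset leader -/
lemma decomp_of_CL {C : Submodule K (Fin n → K)} (b : Module.Basis (Fin m) (ZMod p) K) {β : K}
    (hβ : ∀ j : Fin m, b j = β ^ (j : ℕ)) {u : Fin n → K}
    (hu : isCosetLeader C u) (h0 : u ≠ 0) :
    ∃ (n₁ : Fin n → K) (i : Fin n) (j : Fin m), n₁ + eGen β i j = u ∧
      (b.repr ((n₁ + eGen β i j) i) j).val = (b.repr (n₁ i) j).val + 1 ∧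
      dHSet (CL C) n₁ ≤ 1 := by
  obtain ⟨i, hi⟩ : ∃ i, u i ≠ 0 := by
    by_contra h; push_neg at h; exact h0 (funext h)
  obtain ⟨j, hj⟩ := exists_repr_ne b hi
  refine ⟨u - eGen β i j, i, j, by abel, ?_, ?_⟩
  · have h1 : (u - eGen β i j + eGen β i j) = u := by abel
    rw [h1]
    have h2 : (u - eGen β i j) i = u i - β ^ (j : ℕ) := by
      simp [eGen, Pi.single_eq_same]
    rw [h2, repr_sub_pow b hβ]
    exact val_pred hj
  · have hd : dH (u - eGen β i j) u = hw ((u - eGen β i j) - u) := rfl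
    have hval : ((u - eGen β i j) - u) = -(eGen β i j) := by abel
    have : hw ((u - eGen β i j) - u) ≤ 1 := by
      rw [hval]
      refine hw_le_one i (fun i' hi' => ?_)
      simp [eGen, Pi.single_eq_of_ne hi']
    exact le_trans (dHSet_le hu) (by rw [dH]; exact this)

/-- LEMMA D: decomposition of a nonzero word close to CL -/
lemma decompD {C : Submodule K (Fin n → K)} (b : Module.Basis (Fin m) (ZMod p) K) {β : K}
    (hβ : ∀ j : Fin m, b j = β ^ (j : ℕ)) {u : Fin n → K}
    (h0 : u ≠ 0) (h1 : dHSet (CL C) u ≤ 1) :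
    ∃ (n₁ : Fin n → K) (i : Fin n) (j : Fin m), n₁ + eGen β i j = u ∧
      (b.repr ((n₁ + eGen β i j) i) j).val = (b.repr (n₁ i) j).val + 1 ∧
      dHSet (CL C) n₁ ≤ 1 := by
  obtain ⟨w, hwCL, hclose⟩ := exists_close h1
  rcases Nat.lt_or_ge (hw (u - w)) 1 with hlt | hge
  · -- u = w is a coset leader
    have : u - w = 0 := hw_eq_zero_iff.mp (by omega)
    have huw : u = w := by rwa [sub_eq_zero] at this
    exact decomp_of_CL b hβ (huw ▸ hwCL) h0
  · have hcard : hw (u - w) = 1 := le_antisymm hclose hge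
    obtain ⟨i₀, hi₀⟩ := Finset.card_eq_one.mp hcard
    have hmem : ∀ i, (u - w) i ≠ 0 ↔ i = i₀ := by
      intro i
      constructor
      · intro h
        have : i ∈ Finset.univ.filter fun i => (u - w) i ≠ 0 := by
          simp only [Finset.mem_filter, Finset.mem_univ, true_and]; exact h
        rw [hi₀] at this; simpa using this
      · intro h
        have : i₀ ∈ ({i₀} : Finset (Fin n)) := by simp
        rw [← hi₀] at this
        simp only [Finset.mem_filter] at this
        exact h ▸ this.2
    have hoff : ∀ i, i ≠ i₀ → u i = w i := by
      intro i hi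
      have h2 : ¬ (u - w) i ≠ 0 := fun hc => hi ((hmem i).mp hc)
      push_neg at h2
      have h3 : u i - w i = 0 := h2
      exact sub_eq_zero.mp h3
    by_cases hu0 : u i₀ = 0
    · -- u is w with coordinate i₀ zeroed, hence a coset leader
      have huw : u = Function.update w i₀ 0 := by
        funext i
        by_cases hi : i = i₀
        · simp [hi, Function.update, hu0]
        · simp [Function.update, hi, hoff i hi]
      have huCL : isCosetLeader C u := huw ▸ zeroing hwCL i₀
      exact decomp_of_CL b hβ huCL h0
    · obtain ⟨j, hj⟩ := exists_repr_ne b hu0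
      refine ⟨u - eGen β i₀ j, i₀, j, by abel, ?_, ?_⟩
      · have h1 : (u - eGen β i₀ j + eGen β i₀ j) = u := by abel
        rw [h1]
        have h2 : (u - eGen β i₀ j) i₀ = u i₀ - β ^ (j : ℕ) := by
          simp [eGen, Pi.single_eq_same]
        rw [h2, repr_sub_pow b hβ]
        exact val_pred hj
      · have : hw ((u - eGen β i₀ j) - w) ≤ 1 := by
          refine hw_le_one i₀ (fun i' hi' => ?_)
          have : (u - eGen β i₀ j - w) i' = u i' - (eGen β i₀ j) i' - w i' := rfl
          rw [this, hoff i' hi']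
          simp [eGen, Pi.single_eq_of_ne hi']
        exact le_trans (dHSet_le hwCL) this
end Helpers2
section Helpers3
set_option linter.unusedSectionVars false

variable {p m n : ℕ} [Fact p.Prime] {K : Type} [Field K] [Fintype K] [DecidableEq K]
  [Algebra (ZMod p) K]

/-- assembling a leader codeword -/
lemma mkLeader {C : Submodule K (Fin n → K)} (b : Module.Basis (Fin m) (ZMod p) K) {β : K}
    (hβ : ∀ j : Fin m, b j = β ^ (j : ℕ)) {u n₂ : Fin n → K}
    (h0 : u ≠ 0) (h1 : dHSet (CL C) u ≤ 1) (h2 : isCosetLeader C n₂)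
    (hC : u - n₂ ∈ C) (hne : u ≠ n₂) :
    isLeaderCodeword C b β (u - n₂) := by
  obtain ⟨n₁, i, j, hdecomp, hval, hn₁⟩ := decompD b hβ h0 h1
  refine ⟨sub_ne_zero.mpr hne, hC, n₁, n₂, i, j, by rw [hdecomp], hval, h2, hn₁, ?_⟩
  rw [hdecomp]; exact h1

/-- CLAIM B : one-step descent by a leader codeword -/
lemma claimB {C : Submodule K (Fin n → K)} (b : Module.Basis (Fin m) (ZMod p) K) {β : K}
    (hβ : ∀ j : Fin m, b j = β ^ (j : ℕ)) :
    ∀ N y, hw y ≤ N → ¬ isCosetLeader C y →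
      ∃ c, isLeaderCodeword C b β c ∧ hw (y + c) < hw y := by
  intro N
  induction N with
  | zero =>
    intro y hy hnCL
    exact absurd (hw_eq_zero_iff.mp (Nat.le_zero.mp hy) ▸ zero_CL C) hnCL
  | succ N ih =>
    intro y hy hnCL
    have hy0 : y ≠ 0 := fun h => hnCL (h ▸ zero_CL C)
    obtain ⟨i, hi⟩ : ∃ i, y i ≠ 0 := by
      by_contra h; push_neg at h; exact hy0 (funext h)
    set z := Function.update y i 0 with hz
    have hoff : ∀ i', i' ≠ i → z i' = y i' := fun i' hi' => by
      simp [hz, Function.update, hi']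
    have hzi : z i = 0 := by simp [hz]
    have hcard : hw y = hw z + 1 := by
      have hset : (Finset.univ.filter fun i' => y i' ≠ 0) =
          insert i (Finset.univ.filter fun i' => z i' ≠ 0) := by
        ext i'
        by_cases hii : i' = i
        · simp [hii, hi]
        · simp [hii, hoff i' hii]
      have hni : i ∉ (Finset.univ.filter fun i' => z i' ≠ 0) := by simp [hzi]
      rw [hw, hset, Finset.card_insert_of_notMem hni, hw]
    by_cases hzCL : isCosetLeader C z
    · -- direct construction : y is at distance 1 from the coset leader z
      -- e := a minimal weight element of the coset of y
      have hSfin : ({v | v - y ∈ C} : Set (Fin n → K)).Finite := Set.toFinite _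
      have hSne : y ∈ hSfin.toFinset := by simp
      obtain ⟨e, heS, hemin⟩ := hSfin.toFinset.exists_min_image hw ⟨y, hSne⟩
      have heC : e - y ∈ C := by simpa using heS
      have hemin' : ∀ v, v - y ∈ C → hw e ≤ hw v := by
        intro v hv
        exact hemin v (by simpa using hv)
      -- hw e < hw y
      obtain ⟨c₀, hc₀C, hc₀⟩ : ∃ c₀ ∈ C, hw (y + c₀) < hw y := by
        by_contra h; push_neg at h; exact hnCL (fun c hc => h c hc)
      have he_lt : hw e < hw y :=
        lt_of_le_of_lt (hemin' (y + c₀) (by simpa using hc₀C)) hc₀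
      have heCL : isCosetLeader C e := by
        intro c hc
        exact hemin' (e + c) (by
          have : e + c - y = (e - y) + c := by abel
          rw [this]; exact C.add_mem heC hc)
      have hey : e ≠ y := fun h => absurd (h ▸ he_lt) (lt_irrefl _)
      -- u := z + (e - y)
      set u := z + (e - y) with hu
      have huz : u - z = e - y := by rw [hu]; abel
      have hune : u ≠ z := by
        intro h
        have : e - y = 0 := by rw [← huz, h, sub_self]
        exact hey (sub_eq_zero.mp this)
      have hu0 : u ≠ 0 := by
        intro h
        have hzC : z ∈ C := by
          have : z = y - e := by
            have := congrArg (fun v => v - (e - y)) h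
            simp only [hu] at this
            rw [add_sub_cancel_right] at this
            rw [this]; abel
          rw [this]
          have : y - e = -(e - y) := by abel
          rw [this]
          exact C.neg_mem heC
        have := hzCL (-z) (C.neg_mem hzC)
        simp only [add_neg_cancel, hw_zero, Nat.le_zero, hw_eq_zero_iff] at this
        rw [h, this] at hune
        exact hune rfl
      have hudist : dHSet (CL C) u ≤ 1 := by
        refine le_trans (dHSet_le (A := CL C) (w := e) heCL) ?_
        have : u - e = z - y := by rw [hu]; abel
        rw [dH, this]
        refine hw_le_one i (fun i' hi' => ?_)
        have : (z - y) i' = z i' - y i' := rfl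
        rw [this, hoff i' hi', sub_self]
      have hleader := mkLeader b hβ hu0 hudist hzCL (huz ▸ heC) hune
      refine ⟨u - z, hleader, ?_⟩
      rw [huz]
      have : y + (e - y) = e := by abel
      rw [this]
      exact he_lt
    · -- induction
      obtain ⟨c, hc, hlt⟩ := ih z (by omega) hzCL
      refine ⟨c, hc, ?_⟩
      have : hw (y + c) ≤ hw (z + c) + 1 :=
        hw_close i (fun i' hi' => by
          have h1 : (y + c) i' = y i' + c i' := rfl
          have h2 : (z + c) i' = z i' + c i' := rfl
          rw [h1, h2, hoff i' hi'])
      omega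

end Helpers3


/-- the set of leader codewords is a trial set. -/
theorem stmt17 (C : Submodule K (Fin n → K)) (b : Module.Basis (Fin m) (ZMod p) K) (β : K)
    (hβ : ∀ j : Fin m, b j = β ^ (j : ℕ))
    (r : (Fin n → K) → (Fin n → K) → Prop)
    (hso : IsStrictTotalOrder (Fin n → K) r)
    (hwt : ∀ x y : Fin n → K, hw x < hw y → r x y)
    (hsub : ∀ x y : Fin n → K, subset1 b x y → x ≠ y → r x y) :
    ∀ y : Fin n → K, y ∈ E0 C r ↔
      ∀ c : Fin n → K, isLeaderCodeword C b β c →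
        (y = y + c ∨ r y (y + c)) := by
  haveI := hso
  intro y
  constructor
  · intro hy c hc
    by_cases h : y + c = y
    · exact Or.inl h.symm
    · exact Or.inr (hy (y + c) (by simpa using hc.2.1) h)
  · intro h
    by_contra hy
    simp only [E0, Set.mem_setOf_eq] at hy
    push_neg at hy
    obtain ⟨z, hzC, hzy, hrz⟩ := hy
    by_cases hCL : isCosetLeader C y
    · -- y is a coset leader but not the r-minimum of its coset
      have wf : WellFounded r := Finite.wellFounded_of_trans_of_irrefl r
      obtain ⟨e, heS, hemin⟩ := wf.has_min {v | v - y ∈ C} ⟨y, by simp⟩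
      have heC : e - y ∈ C := heS
      have heCL : isCosetLeader C e := by
        intro c hc
        by_contra hlt
        push_neg at hlt
        refine hemin (e + c) ?_ (hwt _ _ hlt)
        show e + c - y ∈ C
        have : e + c - y = (e - y) + c := by abel
        rw [this]; exact C.add_mem heC hc
      have hey : e ≠ y := by
        intro hEq
        have hzyr : r z y := by
          rcases trichotomous_of r z y with h1 | h1 | h1
          · exact h1
          · exact absurd h1 hzy
          · exact absurd h1 hrz
        exact hemin z hzC (hEq ▸ hzyr)
      have he0 : e ≠ 0 := by
        intro hEq
        have hyC : y ∈ C := by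
          have : -y ∈ C := by simpa [hEq] using heC
          simpa using C.neg_mem this
        have := hCL (-y) (C.neg_mem hyC)
        simp only [add_neg_cancel, hw_zero, Nat.le_zero, hw_eq_zero_iff] at this
        exact hey (by rw [hEq, this])
      have hedist : dHSet (CL C) e ≤ 1 := by
        refine le_trans (dHSet_le (A := CL C) (w := e) heCL) ?_
        simp [dH, hw_zero]
      have hleader := mkLeader b hβ he0 hedist hCL heC hey
      rcases h (e - y) hleader with h1 | h2
      · have : y + (e - y) = e := by abel
        rw [this] at h1
        exact hey h1.symm
      · have : y + (e - y) = e := by abel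
        rw [this] at h2
        exact hemin y (by simp) h2
    · obtain ⟨c, hc, hlt⟩ := claimB b hβ (hw y) y le_rfl hCL
      rcases h c hc with h1 | h2
      · rw [← h1] at hlt
        exact absurd hlt (lt_irrefl _)
      · exact absurd (trans_of r h2 (hwt _ _ hlt)) (irrefl_of r y)
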